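/- (Proposition 5.1.) Under the standing setting, fix k ∈ ℕ and suppose: ũ is a piecewise constant control with value ũ_j ∈ U on each I_j; ỹ : [0, ∞) → ℝ^d satisfies ỹ(0) = x and ỹ'(t) = Aỹ(t) + Bũ(t) for a.e. t > 0; φ̃ : [0, ∞) → ℝ^d satisfies −φ̃'(t) = Aᵀφ̃(t) + e^{−λt}(ỹ(t) − y_d) for t > 0 and φ̃(t) → 0 as t → ∞; and ũ_k minimizes u ↦ ∫_{I_k} ⟨φ̃(t), Bu⟩ dt + γ b_k (Σ_{i=1}^m |u_i|^p)^{q/p} over u ∈ U. Let ω ∈ ℝ^m with ũ_k + ω ∈ U, let u^ω be the control equal to ũ_k + ω on I_k and equal to ũ elsewhere, and let y^ω satisfy y^ω(0) = x and (y^ω)'(t) = Ay^ω(t) + Bu^ω(t) for a.e. t > 0. Assume the functions t ↦ e^{−λt}‖ỹ(t) − y_d‖², t ↦ e^{−λt}‖y^ω(t) − y_d‖² and t ↦ e^{−λt}‖y^ω(t) − ỹ(t)‖² are integrable on (0, ∞), and ⟨φ̃(t), y^ω(t) − ỹ(t)⟩ → 0 as t → ∞. Then J^Δ(x, u^ω)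 − J^Δ(x, ũ) ≥ ∫₀^∞ (1/2) e^{−λt} ‖y^ω(t) − ỹ(t)‖² dt ≥ 0; in particular J^Δ(x, u^ω) ≥ J^Δ(x, ũ). -/

import Mathlib

/-- The Euclidean inner product on `ℝ^d` (as `Fin d → ℝ`). -/
def eInner {d : ℕ} (x y : Fin d → ℝ) : ℝ := ∑ i, x i * y i

/-- Discount weights `b_k = (e^{-λ t_k} - e^{-λ t_{k+1}})/λ = ∫_{I_k} e^{-λ t} dt`. -/
noncomputable def bcoef (lam : ℝ) (tg : ℕ → ℝ) (k : ℕ) : ℝ :=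
  (Real.exp (-lam * tg k) - Real.exp (-lam * tg (k + 1))) / lam

/-- Cost `J^Δ(x,u)` of a piecewise constant control `v` with trajectory `y`. -/
noncomputable def Jcost (d m : ℕ) (lam γ p q : ℝ) (yd : Fin d → ℝ) (tg : ℕ → ℝ)
    (y : ℝ → Fin d → ℝ) (v : ℕ → Fin m → ℝ) : ℝ :=
  (∫ t in Set.Ioi (0 : ℝ), (1 / 2) * Real.exp (-lam * t) * ∑ i, (y t i - yd i) ^ 2)
    + γ * ∑' k, bcoef lam tg k * (∑ i, |v k i| ^ p) ^ (q / p)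

/-- `y` is the trajectory of `ẏ = Ay + Bu`, `y(0) = x`, for the piecewise constant
control taking value `v k` on the grid interval `I_k = [t_k, t_{k+1})`. -/
def IsTraj (d m : ℕ) (A : Matrix (Fin d) (Fin d) ℝ) (B : Matrix (Fin d) (Fin m) ℝ)
    (x : Fin d → ℝ) (tg : ℕ → ℝ) (y : ℝ → Fin d → ℝ) (v : ℕ → Fin m → ℝ) : Prop :=
  y 0 = x ∧ ContinuousOn y (Set.Ici 0) ∧
    ∀ k, ∀ t ∈ Set.Ioo (tg k) (tg (k + 1)),
      HasDerivAt y (A.mulVec (y t) + B.mulVec (v k)) t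



open MeasureTheory Filter

section Aux


lemma hasDerivAt_pairing {d m : ℕ} (A : Matrix (Fin d) (Fin d) ℝ) (B : Matrix (Fin d) (Fin m) ℝ)
    (lam : ℝ) (yd : Fin d → ℝ) (φ y1 y2 : ℝ → Fin d → ℝ) (u v : Fin m → ℝ) (t : ℝ)
    (hφ : HasDerivAt φ (-(A.transpose.mulVec (φ t)) - Real.exp (-lam * t) • (y1 t - yd)) t)
    (h1 : HasDerivAt y1 (A.mulVec (y1 t) + B.mulVec u) t)
    (h2 : HasDerivAt y2 (A.mulVec (y2 t) + B.mulVec v) t) :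
    HasDerivAt (fun s => eInner (φ s) (y2 s - y1 s))
      (eInner (φ t) (B.mulVec v - B.mulVec u)
        - Real.exp (-lam * t) * eInner (y1 t - yd) (y2 t - y1 t)) t := by
  have hz : HasDerivAt (fun s => y2 s - y1 s)
      (A.mulVec (y2 t - y1 t) + (B.mulVec v - B.mulVec u)) t := by
    have h := h2.sub h1
    refine h.congr_deriv ?_
    rw [Matrix.mulVec_sub]; abel
  set φ' := -(A.transpose.mulVec (φ t)) - Real.exp (-lam * t) • (y1 t - yd) with hφ'
  set z' := A.mulVec (y2 t - y1 t) + (B.mulVec v - B.mulVec u) with hz'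
  have hsum : HasDerivAt (fun s => ∑ i, φ s i * (y2 s i - y1 s i))
      (∑ i, (φ' i * (y2 t i - y1 t i) + φ t i * z' i)) t := by
    apply HasDerivAt.fun_sum
    intro i _
    have hφi : HasDerivAt (fun s => φ s i) (φ' i) t := hasDerivAt_pi.mp hφ i
    have hzi : HasDerivAt (fun s => y2 s i - y1 s i) (z' i) t := by
      have := hasDerivAt_pi.mp hz i
      simpa using this
    exact hφi.mul hzi
  have heq : (∑ i, (φ' i * (y2 t i - y1 t i) + φ t i * z' i))
      = eInner (φ t) (B.mulVec v - B.mulVec u)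
        - Real.exp (-lam * t) * eInner (y1 t - yd) (y2 t - y1 t) := by
    have key : dotProduct (A.transpose.mulVec (φ t)) (y2 t - y1 t)
        = dotProduct (φ t) (A.mulVec (y2 t - y1 t)) := by
      rw [Matrix.mulVec_transpose, ← Matrix.dotProduct_mulVec]
    have e1 : (∑ i, (φ' i * (y2 t i - y1 t i) + φ t i * z' i))
        = dotProduct φ' (y2 t - y1 t) + dotProduct (φ t) z' := by
      simp [dotProduct, Finset.sum_add_distrib, Pi.sub_apply]
    rw [e1, hφ', hz']
    rw [sub_dotProduct, neg_dotProduct, smul_dotProduct,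
      dotProduct_add, key]
    simp only [eInner, dotProduct, smul_eq_mul, Pi.sub_apply]
    ring
  rw [← heq]
  exact hsum



lemma key_identity (g D : ℝ → ℝ) (tg : ℕ → ℝ)
    (htg0 : tg 0 = 0) (htgmono : StrictMono tg)
    (htginf : Tendsto tg atTop atTop)
    (hder : ∀ j, ∀ t ∈ Set.Ioo (tg j) (tg (j+1)), HasDerivAt g (D t) t)
    (hcont : ∀ t > (0:ℝ), ContinuousAt g t)
    (hD : IntegrableOn D (Set.Ioi 0))
    (hg0 : Tendsto g (nhdsWithin 0 (Set.Ioi 0)) (nhds 0))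
    (hginf : Tendsto g atTop (nhds 0)) :
    ∫ t in Set.Ioi (0:ℝ), D t = 0 := by
  have htgpos : ∀ n : ℕ, 1 ≤ n → 0 < tg n := fun n hn => htg0 ▸ htgmono (by omega : 0 < n)
  -- Step 1: FTC on subintervals of a grid cell
  have step1 : ∀ j : ℕ, ∀ a b : ℝ, tg j ≤ a → a ≤ b → b ≤ tg (j+1) → 0 < a →
      ∫ t in a..b, D t = g b - g a := by
    intro j a b hja hab hb1 ha0
    apply intervalIntegral.integral_eq_sub_of_hasDeriv_right_of_le hab
    · intro t ht
      exact (hcont t (lt_of_lt_of_le ha0 ht.1)).continuousWithinAt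
    · intro t ht
      exact (hder j t ⟨lt_of_le_of_lt hja ht.1, lt_of_lt_of_le ht.2 hb1⟩).hasDerivWithinAt
    · rw [intervalIntegrable_iff_integrableOn_Ioc_of_le hab]
      exact hD.mono_set (fun t ht => lt_of_lt_of_le ha0 ht.1.le)
  -- interval integrability on positive intervals
  have hII : ∀ a b : ℝ, 0 < a → a ≤ b → IntervalIntegrable D volume a b := by
    intro a b ha hab
    rw [intervalIntegrable_iff_integrableOn_Ioc_of_le hab]
    exact hD.mono_set (fun t ht => lt_of_lt_of_le ha ht.1.le)
  -- Step 2: FTC from ε to tg n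
  have step2 : ∀ n : ℕ, 1 ≤ n → ∀ ε : ℝ, 0 < ε → ε < tg 1 →
      ∫ t in ε..(tg n), D t = g (tg n) - g ε := by
    intro n hn
    induction n, hn using Nat.le_induction with
    | base =>
      intro ε hε0 hε1
      exact step1 0 ε (tg 1) (htg0 ▸ hε0.le) hε1.le le_rfl hε0
    | succ n hn ih =>
      intro ε hε0 hε1
      have h1 : ∫ t in (tg n)..(tg (n+1)), D t = g (tg (n+1)) - g (tg n) :=
        step1 n (tg n) (tg (n+1)) le_rfl (htgmono (Nat.lt_succ_self n)).le le_rfl (htgpos n hn)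
      have hεn : ε ≤ tg n := le_trans hε1.le (htgmono.monotone hn)
      have := intervalIntegral.integral_add_adjacent_intervals
        (hII ε (tg n) hε0 hεn)
        (hII (tg n) (tg (n+1)) (htgpos n hn) (htgmono (Nat.lt_succ_self n)).le)
      rw [← this, ih ε hε0 hε1, h1]
      ring
  -- Step 3: let ε → 0
  have step3 : ∀ n : ℕ, 1 ≤ n → ∫ t in Set.Ioo (0:ℝ) (tg n), D t = g (tg n) := by
    intro n hn
    set εs : ℕ → ℝ := fun i => tg 1 / (i + 2) with hεs
    have htg1 : 0 < tg 1 := htgpos 1 le_rfl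
    have hεpos : ∀ i, 0 < εs i := fun i => by positivity
    have hεlt : ∀ i, εs i < tg 1 := by
      intro i
      rw [hεs]
      rw [div_lt_iff₀ (by positivity)]
      nlinarith [htg1]
    have hεle : ∀ i, εs i ≤ tg n := fun i => le_trans (hεlt i).le (htgmono.monotone hn)
    have hε0 : Tendsto εs atTop (nhds 0) := by
      rw [hεs]
      have : Tendsto (fun i : ℕ => ((i : ℝ) + 2)) atTop atTop := by
        apply tendsto_atTop_add_const_right
        exact tendsto_natCast_atTop_atTop
      simpa using Tendsto.div_atTop (tendsto_const_nhds) this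
    -- the sets Ioo (εs i) (tg n) increase to Ioo 0 (tg n)
    have hmono : Monotone (fun i => Set.Ioo (εs i) (tg n)) := by
      intro i j hij
      apply Set.Ioo_subset_Ioo _ le_rfl
      rw [hεs]
      apply div_le_div_of_nonneg_left htg1.le (by positivity)
      push_cast; linarith [(Nat.cast_le (α := ℝ)).mpr hij]
    have hunion : (⋃ i, Set.Ioo (εs i) (tg n)) = Set.Ioo 0 (tg n) := by
      apply Set.Subset.antisymm
      · exact Set.iUnion_subset fun i => Set.Ioo_subset_Ioo (hεpos i).le le_rfl
      · intro t ht
        obtain ⟨i, hi⟩ := ((tendsto_order.mp hε0).2 t ht.1).exists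
        exact Set.mem_iUnion.mpr ⟨i, hi, ht.2⟩
    have hInt : IntegrableOn D (⋃ i, Set.Ioo (εs i) (tg n)) := by
      rw [hunion]
      exact hD.mono_set Set.Ioo_subset_Ioi_self
    have hlim1 : Tendsto (fun i => ∫ t in Set.Ioo (εs i) (tg n), D t) atTop
        (nhds (∫ t in Set.Ioo (0:ℝ) (tg n), D t)) := by
      have := MeasureTheory.tendsto_setIntegral_of_monotone
        (fun i => measurableSet_Ioo) hmono hInt
      rwa [hunion] at this
    have hlim2 : Tendsto (fun i => ∫ t in Set.Ioo (εs i) (tg n), D t) atTop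
        (nhds (g (tg n))) := by
      have heq : ∀ i, ∫ t in Set.Ioo (εs i) (tg n), D t = g (tg n) - g (εs i) := by
        intro i
        rw [← MeasureTheory.integral_Ioc_eq_integral_Ioo,
          ← intervalIntegral.integral_of_le (hεle i)]
        exact step2 n hn (εs i) (hεpos i) (hεlt i)
      simp only [heq]
      have : Tendsto (fun i => g (εs i)) atTop (nhds 0) := by
        apply hg0.comp
        apply tendsto_nhdsWithin_of_tendsto_nhds_of_eventually_within _ hε0
        exact Filter.Eventually.of_forall (fun i => hεpos i)
      simpa using (tendsto_const_nhds (x := g (tg n))).sub this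
    exact tendsto_nhds_unique hlim1 hlim2
  -- Step 4: n → ∞
  have hmono : Monotone (fun n : ℕ => Set.Ioo (0:ℝ) (tg (n+1))) := by
    intro i j hij
    exact Set.Ioo_subset_Ioo le_rfl (htgmono.monotone (by omega))
  have hunion : (⋃ n : ℕ, Set.Ioo (0:ℝ) (tg (n+1))) = Set.Ioi 0 := by
    apply Set.Subset.antisymm
    · exact Set.iUnion_subset fun i => Set.Ioo_subset_Ioi_self
    · intro t ht
      obtain ⟨n, hn⟩ := (htginf.eventually_gt_atTop t).exists
      exact Set.mem_iUnion.mpr ⟨n, ht, lt_of_lt_of_le hn (htgmono.monotone (by omega))⟩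
  have hInt : IntegrableOn D (⋃ n : ℕ, Set.Ioo (0:ℝ) (tg (n+1))) := hunion ▸ hD
  have hlim1 : Tendsto (fun n : ℕ => ∫ t in Set.Ioo (0:ℝ) (tg (n+1)), D t) atTop
      (nhds (∫ t in Set.Ioi (0:ℝ), D t)) := by
    have := MeasureTheory.tendsto_setIntegral_of_monotone
      (fun n : ℕ => measurableSet_Ioo) hmono hInt
    rwa [hunion] at this
  have hlim2 : Tendsto (fun n : ℕ => ∫ t in Set.Ioo (0:ℝ) (tg (n+1)), D t) atTop (nhds 0) := by
    have heq : ∀ n : ℕ, ∫ t in Set.Ioo (0:ℝ) (tg (n+1)), D t = g (tg (n+1)) :=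
      fun n => step3 (n+1) (by omega)
    simp only [heq]
    exact hginf.comp ((htginf.comp (tendsto_add_atTop_nat 1)))
  exact tendsto_nhds_unique hlim1 hlim2

lemma eInner_abs_le {d : ℕ} (a b : Fin d → ℝ) : |eInner a b| ≤ ‖a‖ * ∑ i, |b i| := by
  calc |∑ i, a i * b i| ≤ ∑ i, |a i * b i| := Finset.abs_sum_le_sum_abs _ _
    _ ≤ ∑ i, ‖a‖ * |b i| := by
        apply Finset.sum_le_sum
        intro i _
        rw [abs_mul]
        apply mul_le_mul_of_nonneg_right _ (abs_nonneg _)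
        simpa [Real.norm_eq_abs] using norm_le_pi_norm a i
    _ = ‖a‖ * ∑ i, |b i| := (Finset.mul_sum _ _ _).symm

lemma abs_eInner_le_half {d : ℕ} (a b : Fin d → ℝ) :
    |eInner a b| ≤ (∑ i, a i ^ 2) / 2 + (∑ i, b i ^ 2) / 2 := by
  calc |∑ i, a i * b i| ≤ ∑ i, |a i * b i| := Finset.abs_sum_le_sum_abs _ _
    _ ≤ ∑ i, (a i ^ 2 / 2 + b i ^ 2 / 2) := by
        apply Finset.sum_le_sum
        intro i _
        rw [abs_mul]
        nlinarith [sq_abs (a i), sq_abs (b i), sq_nonneg (|a i| - |b i|), abs_nonneg (a i), abs_nonneg (b i)]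
    _ = (∑ i, a i ^ 2) / 2 + (∑ i, b i ^ 2) / 2 := by
        rw [Finset.sum_add_distrib, ← Finset.sum_div, ← Finset.sum_div]

lemma eInner_sub_right {d : ℕ} (a b c : Fin d → ℝ) :
    eInner a (b - c) = eInner a b - eInner a c := by
  simp [eInner, mul_sub, Finset.sum_sub_distrib]

lemma bcoef_nonneg (lam : ℝ) (hlam : 0 < lam) (tg : ℕ → ℝ) (htgmono : StrictMono tg) (j : ℕ) :
    0 ≤ bcoef lam tg j := by
  apply div_nonneg _ hlam.le
  have := htgmono (Nat.lt_succ_self j)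
  have : -lam * tg (j+1) ≤ -lam * tg j := by nlinarith
  linarith [Real.exp_le_exp.mpr this]

lemma summable_bcoef (lam : ℝ) (hlam : 0 < lam) (tg : ℕ → ℝ) (htg0 : tg 0 = 0)
    (htgmono : StrictMono tg) : Summable (bcoef lam tg) := by
  apply summable_of_sum_range_le (c := 1 / lam) (bcoef_nonneg lam hlam tg htgmono)
  intro n
  have htel : ∑ j ∈ Finset.range n, bcoef lam tg j
      = (Real.exp (-lam * tg 0) - Real.exp (-lam * tg n)) / lam := by
    simp only [bcoef]
    rw [← Finset.sum_div]
    congr 1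
    exact Finset.sum_range_sub' (fun j => Real.exp (-lam * tg j)) n
  rw [htel, htg0]
  simp only [mul_zero, Real.exp_zero]
  have h := Real.exp_pos (-lam * tg n)
  gcongr
  linarith

/-- Backward Grönwall: a function differentiable on `(0,∞)` with linearly bounded
derivative on `(0,t₀]` is bounded on `(0,t₀]`. -/
lemma bounded_of_deriv_bound {d : ℕ} (φ F : ℝ → Fin d → ℝ) (t₀ K C : ℝ)
    (ht₀ : 0 < t₀) (hK : 0 < K) (hC : 0 ≤ C)
    (hd : ∀ t > (0:ℝ), HasDerivAt φ (F t) t)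
    (hb : ∀ t ∈ Set.Ioc (0:ℝ) t₀, ‖F t‖ ≤ K * ‖φ t‖ + C) :
    ∃ M, ∀ t ∈ Set.Ioc (0:ℝ) t₀, ‖φ t‖ ≤ M := by
  set δ := ‖φ t₀‖ with hδ
  refine ⟨δ * Real.exp (K * t₀) + C / K * (Real.exp (K * t₀) - 1), ?_⟩
  intro t ht
  set b := t₀ - t with hbdef
  have hb0 : 0 ≤ b := by simp [hbdef]; linarith [ht.2]
  have hblt : b < t₀ := by simp [hbdef]; exact ht.1
  -- apply Grönwall to ψ s = φ (t₀ - s) on [0, b]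
  set ψ : ℝ → Fin d → ℝ := fun s => φ (t₀ - s) with hψ
  have hmem : ∀ s ∈ Set.Icc (0:ℝ) b, (0:ℝ) < t₀ - s ∧ t₀ - s ≤ t₀ := by
    intro s hs
    constructor
    · linarith [hs.2]
    · linarith [hs.1]
  have hder : ∀ s ∈ Set.Icc (0:ℝ) b, HasDerivAt ψ ((-1 : ℝ) • F (t₀ - s)) s := by
    intro s hs
    have h1 : HasDerivAt (fun s : ℝ => t₀ - s) (-1) s := by
      simpa using (hasDerivAt_id s).const_sub t₀
    exact HasDerivAt.scomp s (hd _ (hmem s hs).1) h1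
  have hcont : ContinuousOn ψ (Set.Icc 0 b) := by
    intro s hs
    exact ((hder s hs).continuousAt).continuousWithinAt
  have hgron := norm_le_gronwallBound_of_norm_deriv_right_le (f := ψ)
    (f' := fun s => (-1 : ℝ) • F (t₀ - s)) (δ := δ) (K := K) (ε := C) (a := 0) (b := b)
    hcont
    (fun s hs => (hder s (Set.Ico_subset_Icc_self hs)).hasDerivWithinAt)
    (by simp [hψ, hδ])
    (fun s hs => by
      have hmem' := hmem s (Set.Ico_subset_Icc_self hs)
      have := hb (t₀ - s) ⟨hmem'.1, hmem'.2⟩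
      simpa [norm_smul] using this)
  have := hgron b ⟨hb0, le_refl b⟩
  rw [gronwallBound_of_K_ne_0 (ne_of_gt hK)] at this
  have hψb : ψ b = φ t := by simp [hψ, hbdef]
  rw [hψb] at this
  refine le_trans this ?_
  have hexp : Real.exp (K * (b - 0)) ≤ Real.exp (K * t₀) := by
    apply Real.exp_le_exp.mpr
    nlinarith [hblt, hK]
  have h1 : 0 ≤ δ := norm_nonneg _
  have h2 : 0 ≤ C / K := div_nonneg hC hK.le
  nlinarith [Real.exp_pos (K * (b - 0)), hexp]

end Aux

set_option maxHeartbeats 1000000 in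
/-- Proposition 5.1: perturbing the control on a single grid interval
`I_k`, around a value minimizing the local Hamiltonian, does not decrease the cost:
`J^Δ(x,u^ω) - J^Δ(x,ũ) ≥ ∫₀^∞ ½ e^{-λt} ‖y^ω - ỹ‖² dt ≥ 0`. -/
theorem local_perturbation_increases_cost
    (d m : ℕ) (A : Matrix (Fin d) (Fin d) ℝ) (B : Matrix (Fin d) (Fin m) ℝ)
    (lam γ p q : ℝ) (hlam : 0 < lam) (hγ : 0 < γ)
    (hp0 : 0 < p) (hp1 : p < 1) (hpq : p ≤ q) (hq1 : q ≤ 1)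
    (yd x : Fin d → ℝ) (U : Set (Fin m → ℝ)) (hUc : IsCompact U) (hUconv : Convex ℝ U)
    (tg : ℕ → ℝ) (htg0 : tg 0 = 0) (htgmono : StrictMono tg)
    (htginf : Filter.Tendsto tg Filter.atTop Filter.atTop)
    (useq : ℕ → Fin m → ℝ) (huseq : ∀ j, useq j ∈ U)
    (ytil : ℝ → Fin d → ℝ) (hytil : IsTraj d m A B x tg ytil useq)
    (φtil : ℝ → Fin d → ℝ)
    (hφtil : ∀ t > (0 : ℝ), HasDerivAt φtil
      (-(A.transpose.mulVec (φtil t)) - Real.exp (-lam * t) • (ytil t - yd)) t)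
    (hφlim : Filter.Tendsto φtil Filter.atTop (nhds 0))
    (k : ℕ)
    (hmin : ∀ u ∈ U,
      (∫ t in Set.Ioo (tg k) (tg (k + 1)), eInner (φtil t) (B.mulVec (useq k)))
          + γ * bcoef lam tg k * (∑ i, |useq k i| ^ p) ^ (q / p)
        ≤ (∫ t in Set.Ioo (tg k) (tg (k + 1)), eInner (φtil t) (B.mulVec u))
          + γ * bcoef lam tg k * (∑ i, |u i| ^ p) ^ (q / p))
    (ω : Fin m → ℝ) (hω : useq k + ω ∈ U)
    (vseq : ℕ → Fin m → ℝ) (hvseq : vseq = Function.update useq k (useq k + ω))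
    (yω : ℝ → Fin d → ℝ) (hyω : IsTraj d m A B x tg yω vseq)
    (hint1 : MeasureTheory.IntegrableOn
      (fun t => Real.exp (-lam * t) * ∑ i, (ytil t i - yd i) ^ 2) (Set.Ioi 0))
    (hint2 : MeasureTheory.IntegrableOn
      (fun t => Real.exp (-lam * t) * ∑ i, (yω t i - yd i) ^ 2) (Set.Ioi 0))
    (hint3 : MeasureTheory.IntegrableOn
      (fun t => Real.exp (-lam * t) * ∑ i, (yω t i - ytil t i) ^ 2) (Set.Ioi 0))
    (hlim : Filter.Tendsto (fun t => eInner (φtil t) (yω t - ytil t))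
      Filter.atTop (nhds 0)) :
    (∫ t in Set.Ioi (0 : ℝ), (1 / 2) * Real.exp (-lam * t) * ∑ i, (yω t i - ytil t i) ^ 2)
        ≤ Jcost d m lam γ p q yd tg yω vseq - Jcost d m lam γ p q yd tg ytil useq ∧
    0 ≤ ∫ t in Set.Ioi (0 : ℝ), (1 / 2) * Real.exp (-lam * t) * ∑ i, (yω t i - ytil t i) ^ 2 := by
  classical
  obtain ⟨hy0til, hyctil, hydtil⟩ := hytil
  obtain ⟨hy0ω, hycω, hydω⟩ := hyω
  have htgnonneg : ∀ j, 0 ≤ tg j := fun j => htg0 ▸ htgmono.monotone (Nat.zero_le j)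
  have htgposS : ∀ j : ℕ, 0 < tg (j+1) :=
    fun j => lt_of_le_of_lt (htgnonneg j) (htgmono (Nat.lt_succ_self j))
  have hvk : vseq k = useq k + ω := by rw [hvseq, Function.update_self]
  have hvj : ∀ j, j ≠ k → vseq j = useq j := fun j hj => by
    rw [hvseq, Function.update_of_ne hj]
  -- the perturbation direction in state space
  set W : Fin d → ℝ := B.mulVec (vseq k) - B.mulVec (useq k) with hWdef
  set cell : Set ℝ := Set.Ioo (tg k) (tg (k+1)) with hcell
  have hcellsub : cell ⊆ Set.Ioc 0 (tg (k+1)) :=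
    fun t ht => ⟨lt_of_le_of_lt (htgnonneg k) ht.1, ht.2.le⟩
  have hcellpos : cell ⊆ Set.Ioi (0:ℝ) := fun t ht => (hcellsub ht).1
  -- continuity of φ on (0,∞)
  have hφcont : ∀ t > (0:ℝ), ContinuousAt φtil t := fun t ht => (hφtil t ht).continuousAt
  -- boundedness of φ on (0, tg (k+1)]
  obtain ⟨M, hM⟩ : ∃ M, ∀ t ∈ Set.Ioc (0:ℝ) (tg (k+1)), ‖φtil t‖ ≤ M := by
    set K : ℝ := ‖LinearMap.toContinuousLinearMap (Matrix.mulVecLin A.transpose)‖ + 1 with hK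
    have hKpos : 0 < K := by positivity
    have hKb : ∀ v : Fin d → ℝ, ‖A.transpose.mulVec v‖ ≤ K * ‖v‖ := by
      intro v
      have h1 := (LinearMap.toContinuousLinearMap (Matrix.mulVecLin A.transpose)).le_opNorm v
      have h2 : (LinearMap.toContinuousLinearMap (Matrix.mulVecLin A.transpose)) v
          = A.transpose.mulVec v := by
        simp [LinearMap.coe_toContinuousLinearMap', Matrix.mulVecLin_apply, Matrix.mulVec_transpose]
      rw [h2] at h1
      refine h1.trans ?_
      apply mul_le_mul_of_nonneg_right _ (norm_nonneg v)
      simp [hK]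
    obtain ⟨C0, hC0⟩ := (isCompact_Icc (a := (0:ℝ)) (b := tg (k+1))).exists_bound_of_continuousOn
      ((hyctil.mono (fun t (ht : t ∈ Set.Icc (0:ℝ) (tg (k+1))) => ht.1)).sub continuousOn_const)
    have hC0' : 0 ≤ C0 := le_trans (norm_nonneg _) (hC0 0 ⟨le_rfl, (htgposS k).le⟩)
    apply bounded_of_deriv_bound φtil
      (fun t => -(A.transpose.mulVec (φtil t)) - Real.exp (-lam * t) • (ytil t - yd))
      (tg (k+1)) K C0 (htgposS k) hKpos hC0' hφtil
    intro t ht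
    have he1 : Real.exp (-lam * t) ≤ 1 := by
      apply Real.exp_le_one_iff.mpr
      nlinarith [ht.1]
    calc ‖-(A.transpose.mulVec (φtil t)) - Real.exp (-lam * t) • (ytil t - yd)‖
        ≤ ‖-(A.transpose.mulVec (φtil t))‖ + ‖Real.exp (-lam * t) • (ytil t - yd)‖ :=
          norm_sub_le _ _
      _ ≤ K * ‖φtil t‖ + C0 := by
          rw [norm_neg, norm_smul, Real.norm_eq_abs, abs_of_pos (Real.exp_pos _)]
          have h3 : ‖ytil t - yd‖ ≤ C0 := hC0 t ⟨ht.1.le, ht.2⟩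
          have h4 := hKb (φtil t)
          nlinarith [Real.exp_pos (-lam * t), norm_nonneg (ytil t - yd)]
  have hM0 : 0 ≤ M := le_trans (norm_nonneg _) (hM (tg (k+1)) ⟨htgposS k, le_rfl⟩)
  -- componentwise continuity helper
  have hcomp : ∀ (y : ℝ → Fin d → ℝ) (s : Set ℝ), ContinuousOn y s →
      ∀ i, ContinuousOn (fun t => y t i) s :=
    fun y s h i => (continuous_apply i).comp_continuousOn h
  set z : ℝ → Fin d → ℝ := fun t => yω t - ytil t with hzdef
  have hzcont : ContinuousOn z (Set.Ici 0) := hycω.sub hyctil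
  have hz0 : z 0 = 0 := by simp [hzdef, hy0ω, hy0til]
  -- the integrand of the cross term and its integrability
  set f4 : ℝ → ℝ := fun t => Real.exp (-lam * t) * eInner (ytil t - yd) (z t) with hf4def
  have hf4cont : ContinuousOn f4 (Set.Ici 0) := by
    apply ContinuousOn.mul (Continuous.continuousOn (Real.continuous_exp.comp (continuous_const.mul continuous_id)))
    apply continuousOn_finset_sum
    intro i _
    exact ((hcomp _ _ hyctil i).sub continuousOn_const).mul (hcomp _ _ hzcont i)
  have hf4meas : MeasureTheory.AEStronglyMeasurable f4 (volume.restrict (Set.Ioi 0)) :=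
    (hf4cont.mono Set.Ioi_subset_Ici_self).aestronglyMeasurable measurableSet_Ioi
  have hf4int : IntegrableOn f4 (Set.Ioi 0) := by
    apply MeasureTheory.Integrable.mono'
      ((hint1.const_mul (1/2)).add (hint3.const_mul (1/2))) hf4meas
    rw [MeasureTheory.ae_restrict_iff' measurableSet_Ioi]
    apply Filter.Eventually.of_forall
    intro t ht
    have h1 := abs_eInner_le_half (fun i => ytil t i - yd i) (fun i => z t i)
    have he : 0 < Real.exp (-lam * t) := Real.exp_pos _
    have h2 : |eInner (ytil t - yd) (z t)| ≤
        (∑ i, (ytil t i - yd i)^2)/2 + (∑ i, (z t i)^2)/2 := by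
      exact h1
    rw [Real.norm_eq_abs, hf4def, abs_mul, abs_of_pos he]
    calc Real.exp (-lam * t) * |eInner (ytil t - yd) (z t)|
        ≤ Real.exp (-lam * t) * ((∑ i, (ytil t i - yd i)^2)/2 + (∑ i, (z t i)^2)/2) :=
          mul_le_mul_of_nonneg_left h2 he.le
      _ = 1/2 * (Real.exp (-lam * t) * ∑ i, (ytil t i - yd i)^2)
          + 1/2 * (Real.exp (-lam * t) * ∑ i, (z t i)^2) := by ring
      _ ≤ _ := le_refl _
  -- integrability of pairings against φ on the cell
  have hIb : ∀ c : Fin d → ℝ, IntegrableOn (fun t => eInner (φtil t) c) cell := by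
    intro c
    have hbd : ∀ t ∈ cell, ‖eInner (φtil t) c‖ ≤ M * ∑ i, |c i| := by
      intro t ht
      rw [Real.norm_eq_abs]
      refine le_trans (eInner_abs_le _ _) ?_
      apply mul_le_mul_of_nonneg_right (hM t (hcellsub ht))
      positivity
    have hcont : ContinuousOn (fun t => eInner (φtil t) c) cell := by
      intro t ht
      apply ContinuousAt.continuousWithinAt
      have : ContinuousAt φtil t := hφcont t (hcellpos ht)
      exact tendsto_finset_sum _ fun i _ => (((continuous_apply i).continuousAt).comp this).mul
        continuousAt_const
    apply MeasureTheory.Integrable.mono' (g := fun _ => M * ∑ i, |c i|)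
      ((MeasureTheory.integrableOn_const_iff).mpr (Or.inr (by simp [hcell])))
      (hcont.aestronglyMeasurable measurableSet_Ioo)
    rw [MeasureTheory.ae_restrict_iff' measurableSet_Ioo]
    exact Filter.Eventually.of_forall hbd
  -- the full derivative D and the function g
  set g : ℝ → ℝ := fun t => eInner (φtil t) (z t) with hgdef
  set D : ℝ → ℝ := fun t =>
    cell.indicator (fun t => eInner (φtil t) W) t - f4 t with hDdef
  have hDind_int : Integrable (cell.indicator (fun t => eInner (φtil t) W)) volume :=
    (hIb W).integrable_indicator measurableSet_Ioo
  have hDint : IntegrableOn D (Set.Ioi 0) :=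
    (hDind_int.integrableOn).sub hf4int
  -- cells are disjoint
  have hdisj : ∀ j t, j ≠ k → t ∈ Set.Ioo (tg j) (tg (j+1)) → t ∉ cell := by
    intro j t hjk ht htk
    rcases lt_or_gt_of_ne hjk with h | h
    · have : tg (j+1) ≤ tg k := htgmono.monotone h
      exact absurd (lt_of_lt_of_le ht.2 this) (not_lt.mpr htk.1.le)
    · have : tg (k+1) ≤ tg j := htgmono.monotone h
      exact absurd (lt_of_lt_of_le htk.2 this) (not_lt.mpr ht.1.le)
  -- derivative of g
  have hderg : ∀ j, ∀ t ∈ Set.Ioo (tg j) (tg (j+1)), HasDerivAt g (D t) t := by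
    intro j t ht
    have htpos : 0 < t := lt_of_le_of_lt (htgnonneg j) ht.1
    have h := hasDerivAt_pairing A B lam yd φtil ytil yω (useq j) (vseq j) t
      (hφtil t htpos) (hydtil j t ht) (hydω j t ht)
    have heq : eInner (φtil t) (B.mulVec (vseq j) - B.mulVec (useq j))
        - Real.exp (-lam * t) * eInner (ytil t - yd) (yω t - ytil t) = D t := by
      simp only [hDdef, hf4def, hzdef]
      by_cases hjk : j = k
      · have htc : t ∈ cell := by rw [hcell, ← hjk]; exact ht
        rw [Set.indicator_of_mem htc, hWdef, hjk]
      · rw [Set.indicator_of_notMem (hdisj j t hjk ht), hvj j hjk]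
        simp [eInner]
    rw [← heq]
    exact h
  -- continuity of g on (0,∞)
  have hgcont : ∀ t > (0:ℝ), ContinuousAt g t := by
    intro t ht
    have h1 : ContinuousAt φtil t := hφcont t ht
    have h2 : ContinuousAt z t := (hzcont.continuousAt (Ici_mem_nhds ht))
    exact tendsto_finset_sum _ fun i _ =>
      (((continuous_apply i).continuousAt).comp h1).mul
        (((continuous_apply i).continuousAt).comp h2)
  -- limit of g at 0 from the right
  have hg0 : Tendsto g (nhdsWithin 0 (Set.Ioi 0)) (nhds 0) := by
    have hz0' : Tendsto (fun t => ∑ i, |z t i|) (nhdsWithin 0 (Set.Ioi 0)) (nhds 0) := by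
      have h1 : Tendsto z (nhdsWithin 0 (Set.Ioi 0)) (nhds (z 0)) :=
        (hzcont 0 Set.self_mem_Ici).mono_left (nhdsWithin_mono 0 Set.Ioi_subset_Ici_self)
      have h2 : Continuous (fun v : Fin d → ℝ => ∑ i, |v i|) :=
        continuous_finset_sum _ fun i _ => continuous_abs.comp (continuous_apply i)
      have := (h2.tendsto (z 0)).comp h1
      simpa [hz0, Function.comp_def] using this
    have hb : ∀ᶠ t in nhdsWithin 0 (Set.Ioi 0), ‖g t‖ ≤ M * ∑ i, |z t i| := by
      filter_upwards [Ioo_mem_nhdsGT_of_mem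
        (Set.mem_Ico.mpr ⟨le_refl (0:ℝ), htgposS k⟩)] with t ht
      rw [Real.norm_eq_abs]
      refine le_trans (eInner_abs_le _ _) ?_
      apply mul_le_mul_of_nonneg_right (hM t ⟨ht.1, ht.2.le⟩)
      positivity
    have ht2 : Tendsto (fun t => M * ∑ i, |z t i|) (nhdsWithin 0 (Set.Ioi 0)) (nhds 0) := by
      simpa using hz0'.const_mul M
    exact squeeze_zero_norm' hb ht2
  -- key identity
  have hkey : ∫ t in Set.Ioi (0:ℝ), D t = 0 := by
    apply key_identity g D tg htg0 htgmono htginf hderg hgcont hDint hg0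
    exact hlim
  -- consequence: the cross-term integral equals the cell pairing integral
  have hsplitD : ∫ t in Set.Ioi (0:ℝ), D t
      = (∫ t in cell, eInner (φtil t) W) - ∫ t in Set.Ioi (0:ℝ), f4 t := by
    rw [hDdef]
    rw [MeasureTheory.integral_sub (hDind_int.integrableOn) hf4int]
    congr 1
    rw [MeasureTheory.integral_indicator measurableSet_Ioo,
      MeasureTheory.Measure.restrict_restrict measurableSet_Ioo,
      Set.inter_eq_self_of_subset_left hcellpos]
  have hI2 : ∫ t in Set.Ioi (0:ℝ), f4 t = ∫ t in cell, eInner (φtil t) W := by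
    rw [hsplitD] at hkey; linarith
  -- split the cell pairing integral
  have hWsplit : ∫ t in cell, eInner (φtil t) W
      = (∫ t in cell, eInner (φtil t) (B.mulVec (vseq k)))
        - ∫ t in cell, eInner (φtil t) (B.mulVec (useq k)) := by
    rw [← MeasureTheory.integral_sub (hIb _) (hIb _)]
    apply MeasureTheory.setIntegral_congr_fun measurableSet_Ioo
    intro t _
    simp only [hWdef, eInner_sub_right]
  -- integral part of the cost difference
  set f3 : ℝ → ℝ := fun t => (1/2) * Real.exp (-lam * t) * ∑ i, (z t i)^2 with hf3def
  have hf3int : IntegrableOn f3 (Set.Ioi 0) := by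
    have h := hint3.const_mul (1/2)
    exact h.congr (Filter.Eventually.of_forall fun t => by simp only [hf3def, hzdef, Pi.sub_apply]; ring)
  have hintdiff :
      (∫ t in Set.Ioi (0:ℝ), (1/2) * Real.exp (-lam * t) * ∑ i, (yω t i - yd i)^2)
        - (∫ t in Set.Ioi (0:ℝ), (1/2) * Real.exp (-lam * t) * ∑ i, (ytil t i - yd i)^2)
      = (∫ t in Set.Ioi (0:ℝ), f3 t) + ∫ t in Set.Ioi (0:ℝ), f4 t := by
    have h12 : IntegrableOn
        (fun t => (1/2) * Real.exp (-lam * t) * ∑ i, (ytil t i - yd i)^2) (Set.Ioi 0) :=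
      (hint1.const_mul (1/2)).congr (Filter.Eventually.of_forall fun t => by ring)
    have hptwise : ∀ t : ℝ, (1/2) * Real.exp (-lam * t) * ∑ i, (yω t i - yd i)^2
        = (1/2) * Real.exp (-lam * t) * ∑ i, (ytil t i - yd i)^2 + (f3 t + f4 t) := by
      intro t
      simp only [hf3def, hf4def, hzdef, eInner, Pi.sub_apply]
      have hsq : ∀ i : Fin d, (yω t i - yd i)^2 = (ytil t i - yd i)^2
          + ((yω t i - ytil t i)^2 + 2*((ytil t i - yd i)*(yω t i - ytil t i))) :=
        fun i => by ring
      rw [Finset.sum_congr rfl (fun i _ => hsq i), Finset.sum_add_distrib,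
        Finset.sum_add_distrib, ← Finset.mul_sum]
      ring
    have hEq : (∫ t in Set.Ioi (0:ℝ), (1/2) * Real.exp (-lam * t) * ∑ i, (yω t i - yd i)^2)
        = ∫ t in Set.Ioi (0:ℝ),
            ((1/2) * Real.exp (-lam * t) * ∑ i, (ytil t i - yd i)^2 + (f3 t + f4 t)) :=
      MeasureTheory.integral_congr_ae (Filter.Eventually.of_forall hptwise)
    have h34 : IntegrableOn (fun t => f3 t + f4 t) (Set.Ioi 0) := hf3int.add hf4int
    rw [hEq, MeasureTheory.integral_add h12 h34,
      MeasureTheory.integral_add hf3int hf4int]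
    ring
  -- tsum part
  set Nf : (Fin m → ℝ) → ℝ := fun u => (∑ i, |u i| ^ p) ^ (q/p) with hNf
  have hqp : 0 < q / p := div_pos (lt_of_lt_of_le hp0 hpq) hp0
  have hNf0 : ∀ u, 0 ≤ Nf u := fun u =>
    Real.rpow_nonneg (Finset.sum_nonneg fun i _ => Real.rpow_nonneg (abs_nonneg _) p) _
  obtain ⟨R, hR⟩ : ∃ R : ℝ, ∀ u ∈ U, ‖u‖ ≤ R := hUc.exists_bound_of_continuousOn continuousOn_id
  set C : ℝ := ((m : ℝ) * (max R 1) ^ p) ^ (q/p) with hC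
  have hNfC : ∀ u ∈ U, Nf u ≤ C := by
    intro u hu
    apply Real.rpow_le_rpow (Finset.sum_nonneg fun i _ => Real.rpow_nonneg (abs_nonneg _) p)
      ?_ hqp.le
    calc ∑ i, |u i| ^ p ≤ ∑ _i : Fin m, (max R 1) ^ p := by
          apply Finset.sum_le_sum
          intro i _
          apply Real.rpow_le_rpow (abs_nonneg _) ?_ hp0.le
          refine le_trans ?_ (le_max_left R 1)
          simpa [Real.norm_eq_abs] using (norm_le_pi_norm u i).trans (hR u hu)
      _ = (m : ℝ) * (max R 1) ^ p := by simp [mul_comm]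
  have hsb := summable_bcoef lam hlam tg htg0 htgmono
  have hsummU : Summable (fun j => bcoef lam tg j * Nf (useq j)) := by
    apply Summable.of_nonneg_of_le
      (fun j => mul_nonneg (bcoef_nonneg lam hlam tg htgmono j) (hNf0 _))
      (fun j => mul_le_mul_of_nonneg_left (hNfC _ (huseq j)) (bcoef_nonneg lam hlam tg htgmono j))
    exact hsb.mul_right C
  have hvU : ∀ j, vseq j ∈ U := by
    intro j
    by_cases hj : j = k
    · rw [hj, hvk]; exact hω
    · rw [hvj j hj]; exact huseq j
  have hsummV : Summable (fun j => bcoef lam tg j * Nf (vseq j)) := by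
    apply Summable.of_nonneg_of_le
      (fun j => mul_nonneg (bcoef_nonneg lam hlam tg htgmono j) (hNf0 _))
      (fun j => mul_le_mul_of_nonneg_left (hNfC _ (hvU j)) (bcoef_nonneg lam hlam tg htgmono j))
    exact hsb.mul_right C
  have htsum : (∑' j, bcoef lam tg j * Nf (vseq j)) - (∑' j, bcoef lam tg j * Nf (useq j))
      = bcoef lam tg k * (Nf (vseq k) - Nf (useq k)) := by
    rw [← hsummV.tsum_sub hsummU]
    rw [tsum_eq_single k]
    · ring
    · intro j hj
      rw [hvj j hj]
      ring
  -- minimality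
  have hmink := hmin (vseq k) (hvk ▸ hω)
  have hlast : 0 ≤ (∫ t in cell, eInner (φtil t) W)
      + γ * (bcoef lam tg k * (Nf (vseq k) - Nf (useq k))) := by
    rw [hWsplit]
    have h1 : (∫ t in cell, eInner (φtil t) (B.mulVec (vseq k)))
        = ∫ t in Set.Ioo (tg k) (tg (k+1)), eInner (φtil t) (B.mulVec (vseq k)) := by rw [hcell]
    have h2 : (∫ t in cell, eInner (φtil t) (B.mulVec (useq k)))
        = ∫ t in Set.Ioo (tg k) (tg (k+1)), eInner (φtil t) (B.mulVec (useq k)) := by rw [hcell]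
    rw [h1, h2]
    simp only [hNf]
    nlinarith [hmink]
  -- assembly
  constructor
  · have hJω : Jcost d m lam γ p q yd tg yω vseq
        = (∫ t in Set.Ioi (0:ℝ), (1/2) * Real.exp (-lam * t) * ∑ i, (yω t i - yd i)^2)
          + γ * ∑' j, bcoef lam tg j * Nf (vseq j) := by
      simp [Jcost, hNf]
    have hJtil : Jcost d m lam γ p q yd tg ytil useq
        = (∫ t in Set.Ioi (0:ℝ), (1/2) * Real.exp (-lam * t) * ∑ i, (ytil t i - yd i)^2)
          + γ * ∑' j, bcoef lam tg j * Nf (useq j) := by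
      simp [Jcost, hNf]
    have hgoalf3 : (∫ t in Set.Ioi (0:ℝ),
        (1/2) * Real.exp (-lam * t) * ∑ i, (yω t i - ytil t i)^2)
        = ∫ t in Set.Ioi (0:ℝ), f3 t := by
      apply MeasureTheory.integral_congr_ae (Filter.Eventually.of_forall ?_)
      intro t
      simp [hf3def, hzdef]
    rw [hJω, hJtil, hgoalf3]
    have hγts : γ * (∑' j, bcoef lam tg j * Nf (vseq j))
        - γ * (∑' j, bcoef lam tg j * Nf (useq j))
        = γ * (bcoef lam tg k * (Nf (vseq k) - Nf (useq k))) := by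
      rw [← mul_sub, htsum]
    nlinarith [hintdiff, hI2, hlast, hγts]
  · apply MeasureTheory.setIntegral_nonneg measurableSet_Ioi
    intro t _
    have := Real.exp_pos (-lam * t)
    have hs : 0 ≤ ∑ i, (yω t i - ytil t i)^2 := Finset.sum_nonneg fun i _ => sq_nonneg _
    positivity
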